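/- The posterior β parameter in the Normal-inverse-Gamma linear regression update is nonnegative: β_n = β₀ + ½(yᵀy + u₀ᵀV₀⁻¹u₀ − u_nᵀV_n⁻¹u_n) ≥ β₀ > 0, where V_n⁻¹ = XXᵀ + V₀⁻¹ and u_n = V_n(Xy + V₀⁻¹u₀). -/

import Mathlib

open Matrix

/-- The posterior `β` parameter in the Normal-inverse-Gamma linear regression
update is at least the prior `β₀`, hence positive:
`β_n = β₀ + ½(yᵀy + u₀ᵀV₀⁻¹u₀ − u_nᵀV_n⁻¹u_n) ≥ β₀ > 0`. -/
theorem stmt_7 {d n : ℕ} (X : Matrix (Fin d) (Fin n) ℝ) (y : Fin n → ℝ)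
    (V₀ : Matrix (Fin d) (Fin d) ℝ) (hV₀sym : V₀.IsSymm) (hV₀ : V₀.PosDef)
    (u₀ : Fin d → ℝ) (β₀ : ℝ) (hβ₀ : 0 < β₀)
    (Vninv : Matrix (Fin d) (Fin d) ℝ) (hVninv : Vninv = X * Xᵀ + V₀⁻¹)
    (un : Fin d → ℝ) (hun : un = Vninv⁻¹ *ᵥ (X *ᵥ y + V₀⁻¹ *ᵥ u₀))
    (βn : ℝ)
    (hβn : βn = β₀ + (1 / 2) * (y ⬝ᵥ y + u₀ ⬝ᵥ (V₀⁻¹ *ᵥ u₀) - un ⬝ᵥ (Vninv *ᵥ un))) :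
    β₀ ≤ βn ∧ 0 < βn := by
  
  have hXXt : (X * Xᵀ).PosSemidef := by
    simpa using Matrix.posSemidef_self_mul_conjTranspose X
  have hA : Vninv.PosDef := by
    rw [hVninv]; exact Matrix.PosDef.posSemidef_add hXXt hV₀.inv
  have hdet : IsUnit Vninv.det := isUnit_iff_ne_zero.mpr hA.det_pos.ne'
  have hAun : Vninv *ᵥ un = X *ᵥ y + V₀⁻¹ *ᵥ u₀ := by
    rw [hun, Matrix.mulVec_mulVec, Matrix.mul_nonsing_inv _ hdet, Matrix.one_mulVec]
  -- symmetry of V₀⁻¹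
  have hV₀invsym : (V₀⁻¹)ᵀ = V₀⁻¹ := by
    rw [Matrix.transpose_nonsing_inv, hV₀sym.eq]
  -- scalar identities
  have h1 : (Xᵀ *ᵥ un) ⬝ᵥ (Xᵀ *ᵥ un) = un ⬝ᵥ ((X * Xᵀ) *ᵥ un) := by
    rw [Matrix.dotProduct_mulVec, Matrix.vecMul_transpose, dotProduct_comm, Matrix.mulVec_mulVec]
  have h2 : y ⬝ᵥ (Xᵀ *ᵥ un) = un ⬝ᵥ (X *ᵥ y) := by
    rw [Matrix.dotProduct_mulVec, Matrix.vecMul_transpose, dotProduct_comm]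
  have h3 : u₀ ⬝ᵥ (V₀⁻¹ *ᵥ un) = un ⬝ᵥ (V₀⁻¹ *ᵥ u₀) := by
    rw [Matrix.dotProduct_mulVec, ← hV₀invsym, Matrix.vecMul_transpose, dotProduct_comm,
      hV₀invsym]
  have hkey : y ⬝ᵥ y + u₀ ⬝ᵥ (V₀⁻¹ *ᵥ u₀) - un ⬝ᵥ (Vninv *ᵥ un)
      = (y - Xᵀ *ᵥ un) ⬝ᵥ (y - Xᵀ *ᵥ un) + (un - u₀) ⬝ᵥ (V₀⁻¹ *ᵥ (un - u₀)) := by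
    have hexp : un ⬝ᵥ (Vninv *ᵥ un) = un ⬝ᵥ ((X * Xᵀ) *ᵥ un) + un ⬝ᵥ (V₀⁻¹ *ᵥ un) := by
      rw [hVninv, Matrix.add_mulVec, dotProduct_add]
    have hb : un ⬝ᵥ (Vninv *ᵥ un) = un ⬝ᵥ (X *ᵥ y) + un ⬝ᵥ (V₀⁻¹ *ᵥ u₀) := by
      rw [hAun, dotProduct_add]
    simp only [sub_dotProduct, dotProduct_sub, Matrix.mulVec_sub]
    rw [h1, h3, dotProduct_comm (Xᵀ *ᵥ un) y, h2]
    linarith [hexp, hb]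
  have hnn : 0 ≤ y ⬝ᵥ y + u₀ ⬝ᵥ (V₀⁻¹ *ᵥ u₀) - un ⬝ᵥ (Vninv *ᵥ un) := by
    rw [hkey]
    have h4 : 0 ≤ (y - Xᵀ *ᵥ un) ⬝ᵥ (y - Xᵀ *ᵥ un) := by
      apply Finset.sum_nonneg; intro i _; exact mul_self_nonneg _
    have h5 : 0 ≤ (un - u₀) ⬝ᵥ (V₀⁻¹ *ᵥ (un - u₀)) := by
      simpa using hV₀.inv.posSemidef.dotProduct_mulVec_nonneg (un - u₀)
    linarith
  constructor
  · rw [hβn]; linarith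
  · rw [hβn]; linarith
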